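/- arXiv:1909.07047 — 5 statements merged into one kernel-verified Lean document; each statement's English description precedes it below -/
import Mathlib

section
/- For all quaternions a, b, c, d: ‖a*c - (star d)*b‖² + ‖d*a + b*(star c)‖² = (‖a‖² + ‖b‖²) · (‖c‖² + ‖d‖²). In other words, the Cayley–Dickson norm on 𝕆 = ℍ × ℍ is multiplicative: N(x ∘ y) = N(x) · N(y) for all x, y ∈ 𝕆. -/
open Quaternion

/-- The Cayley–Dickson norm on `𝕆 = ℍ × ℍ` is multiplicative:
for all quaternions `a b c d`,
`‖a*c - (star d)*b‖² + ‖d*a + b*(star c)‖² = (‖a‖² + ‖b‖²) * (‖c‖² + ‖d‖²)`,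
i.e. `N(x ∘ y) = N(x) * N(y)` for the Cayley–Dickson product. -/
theorem cayleyDickson_norm_mul (a b c d : ℍ[ℝ]) :
    ‖a * c - star d * b‖ ^ 2 + ‖d * a + b * star c‖ ^ 2 =
      (‖a‖ ^ 2 + ‖b‖ ^ 2) * (‖c‖ ^ 2 + ‖d‖ ^ 2) := by
  have h : ∀ q : ℍ[ℝ], ‖q‖ ^ 2 = normSq q := fun q => by
    rw [sq, ← normSq_eq_norm_mul_self]
  simp only [h, normSq_def', re_sub, imI_sub, imJ_sub, imK_sub, re_add, imI_add, imJ_add,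
    imK_add, re_mul, imI_mul, imJ_mul, imK_mul, re_star, imI_star, imJ_star, imK_star]
  ring
end

section
/- The octonions have no zero divisors: for all quaternions a, b, c, d, if a*c - (star d)*b = 0 and d*a + b*(star c) = 0, then (a = 0 and b = 0) or (c = 0 and d = 0). Equivalently, if x ∘ y = 0 in 𝕆 = ℍ × ℍ then x = 0 or y = 0. -/
open Quaternion

lemma octonion_key (a b c d : ℍ[ℝ]) :
    normSq (a * c - star d * b) + normSq (d * a + b * star c) =
      (normSq a + normSq b) * (normSq c + normSq d) := by
  simp only [normSq_def', re_mul, imI_mul, imJ_mul, imK_mul, re_sub, imI_sub, imJ_sub, imK_sub,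
    re_add, imI_add, imJ_add, imK_add, re_star, imI_star, imJ_star, imK_star]
  ring

/-- The octonions (modeled via the Cayley–Dickson construction on `ℍ × ℍ`) have no
zero divisors: if `a*c - (star d)*b = 0` and `d*a + b*(star c) = 0`, then
`(a = 0 ∧ b = 0) ∨ (c = 0 ∧ d = 0)`, i.e. `x ∘ y = 0 → x = 0 ∨ y = 0`. -/
theorem octonion_no_zero_divisors (a b c d : ℍ[ℝ])
    (h1 : a * c - star d * b = 0) (h2 : d * a + b * star c = 0) :
    (a = 0 ∧ b = 0) ∨ (c = 0 ∧ d = 0) := by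
  have key := octonion_key a b c d
  rw [h1, h2, map_zero, add_zero] at key
  rcases mul_eq_zero.mp key.symm with h | h
  · left
    have ha : normSq a = 0 := le_antisymm (by nlinarith [normSq_nonneg (a := b)]) (normSq_nonneg (a := a))
    have hb : normSq b = 0 := by linarith
    exact ⟨normSq_eq_zero.mp ha, normSq_eq_zero.mp hb⟩
  · right
    have hc : normSq c = 0 := le_antisymm (by nlinarith [normSq_nonneg (a := d)]) (normSq_nonneg (a := c))
    have hd : normSq d = 0 := by linarith
    exact ⟨normSq_eq_zero.mp hc, normSq_eq_zero.mp hd⟩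
end

section
/- The octonions satisfy the left alternative law: for all x, y in 𝕆 = ℍ × ℍ, (x ∘ x) ∘ y = x ∘ (x ∘ y), where ∘ is the Cayley–Dickson product. -/
open Quaternion

/-- The Cayley–Dickson product on `𝕆 = ℍ × ℍ`:
`(a,b) ∘ (c,d) = (a*c - (star d)*b, d*a + b*(star c))`. -/
noncomputable def omul (x y : ℍ[ℝ] × ℍ[ℝ]) : ℍ[ℝ] × ℍ[ℝ] :=
  (x.1 * y.1 - star y.2 * x.2, y.2 * x.1 + x.2 * star y.1)

/-- The octonions satisfy the left alternative law:
`(x ∘ x) ∘ y = x ∘ (x ∘ y)`. -/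
theorem octonion_left_alternative (x y : ℍ[ℝ] × ℍ[ℝ]) :
    omul (omul x x) y = omul x (omul x y) := by
  obtain ⟨a, b⟩ := x
  obtain ⟨c, d⟩ := y
  have hN : ∀ q : ℍ[ℝ], star b * b * q = q * (star b * b) := by
    intro q; rw [Quaternion.star_mul_self, Quaternion.coe_commutes]
  have hT : ∀ q : ℍ[ℝ], (a + star a) * q = q * (a + star a) := by
    intro q; rw [Quaternion.self_add_star', Quaternion.coe_commutes]
  have hS : star b * b * d = b * star b * d := by rw [star_comm_self']
  simp only [omul, Prod.mk.injEq, star_add, star_sub, star_mul, star_star]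
  constructor
  · linear_combination (norm := noncomm_ring) -hN c + hT (star d * b)
  · linear_combination (norm := noncomm_ring) hN d - hS + congrArg (b * ·) (hT (star c))
end

section
/- Suppose the triples (x, y, z) and (x', y', z') of elements of 𝕆 = ℍ × ℍ satisfy the six relations x ∘ x^* = x' ∘ x'^*, x ∘ y^* = x' ∘ y'^*, x ∘ z^* = x' ∘ z'^*, y ∘ y^* = y' ∘ y'^*, y ∘ z^* = y' ∘ z'^*, z ∘ z^* = z' ∘ z'^*. Then for all real numbers a, b, c: a•x + b•y + c•z = 0 if and only if a•x' + b•y' + c•z' = 0 (where • denotes the real scalar multiplication on ℍ × ℍ and + the componentwise addition). -/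
open Quaternion

/-- The Cayley–Dickson conjugation on `𝕆 = ℍ × ℍ`: `(a,b)^* = (star a, -b)`. -/
def oconj (x : ℍ[ℝ] × ℍ[ℝ]) : ℍ[ℝ] × ℍ[ℝ] := (star x.1, -x.2)

noncomputable def Bform (u v : ℍ[ℝ] × ℍ[ℝ]) : ℝ :=
  (u.1 * star v.1).re + (u.2 * star v.2).re

lemma Bform_eq (u v : ℍ[ℝ] × ℍ[ℝ]) : (omul u (oconj v)).1.re = Bform u v := by
  simp [omul, oconj, Bform, Quaternion.re_mul]
  ring

lemma Bform_self_eq_zero_iff (u : ℍ[ℝ] × ℍ[ℝ]) : Bform u u = 0 ↔ u = 0 := by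
  have h1 : Bform u u = normSq u.1 + normSq u.2 := by
    simp [Bform, Quaternion.re_mul, Quaternion.normSq_def']
    ring
  rw [h1]
  constructor
  · intro h
    have n1 := normSq_nonneg (a := u.1)
    have n2 := normSq_nonneg (a := u.2)
    have e1 : normSq u.1 = 0 := by linarith
    have e2 : normSq u.2 = 0 := by linarith
    exact Prod.ext (normSq_eq_zero.mp e1) (normSq_eq_zero.mp e2)
  · intro h
    simp [h]
lemma Bform_expand (x y z : ℍ[ℝ] × ℍ[ℝ]) (a b c : ℝ) :
    Bform (a • x + b • y + c • z) (a • x + b • y + c • z) =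
      a*a*Bform x x + b*b*Bform y y + c*c*Bform z z
      + 2*(a*b)*Bform x y + 2*(a*c)*Bform x z + 2*(b*c)*Bform y z := by
  simp [Bform, Quaternion.re_mul, Prod.fst_add, Prod.snd_add, Prod.smul_fst, Prod.smul_snd]
  ring

/-- If triples `(x, y, z)` and `(x', y', z')` of octonions satisfy the six relations
defining the equivalence in the construction of `𝕆P²`, then for all real `a b c`,
`a•x + b•y + c•z = 0 ↔ a•x' + b•y' + c•z' = 0`. -/
theorem octonion_lin_comb_zero_iff (x y z x' y' z' : ℍ[ℝ] × ℍ[ℝ])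
    (hxx : omul x (oconj x) = omul x' (oconj x'))
    (hxy : omul x (oconj y) = omul x' (oconj y'))
    (hxz : omul x (oconj z) = omul x' (oconj z'))
    (hyy : omul y (oconj y) = omul y' (oconj y'))
    (hyz : omul y (oconj z) = omul y' (oconj z'))
    (hzz : omul z (oconj z) = omul z' (oconj z'))
    (a b c : ℝ) :
    a • x + b • y + c • z = 0 ↔ a • x' + b • y' + c • z' = 0 := by
  have exx := congrArg (fun p => p.1.re) hxx
  have exy := congrArg (fun p => p.1.re) hxy
  have exz := congrArg (fun p => p.1.re) hxz
  have eyy := congrArg (fun p => p.1.re) hyy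
  have eyz := congrArg (fun p => p.1.re) hyz
  have ezz := congrArg (fun p => p.1.re) hzz
  simp only [Bform_eq] at exx exy exz eyy eyz ezz
  rw [← Bform_self_eq_zero_iff, ← Bform_self_eq_zero_iff, Bform_expand, Bform_expand,
    exx, exy, exz, eyy, eyz, ezz]
end

section
/- Let S = {(x, y) ∈ 𝕆 × 𝕆 : N(x) + N(y) = 1} (the unit sphere in 𝕆², with the subspace topology from (ℍ × ℍ) × (ℍ × ℍ)), and let r be the relation on S given by (x, y) r (x̃, ỹ) if and only if x ∘ x^* = x̃ ∘ x̃^*, x ∘ y^* = x̃ ∘ ỹ^*, and y ∘ y^* = ỹ ∘ ỹ^*. Then the quotient space S / r (with the quotient topology) is homeomorphic to the 8-sphere, i.e., to the unit sphere {v ∈ EuclideanSpace ℝ (Fin 9) : ‖v‖ = 1}. -/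
open Quaternion

/-- The Cayley–Dickson squared norm on `𝕆 = ℍ × ℍ`: `N(a,b) = ‖a‖² + ‖b‖²`. -/
noncomputable def N (x : ℍ[ℝ] × ℍ[ℝ]) : ℝ := ‖x.1‖ ^ 2 + ‖x.2‖ ^ 2

/-- The unit sphere `S = {(x, y) ∈ 𝕆 × 𝕆 : N(x) + N(y) = 1}`, with the subspace
topology from `(ℍ × ℍ) × (ℍ × ℍ)`. -/
def OSphere : Type :=
  { p : (ℍ[ℝ] × ℍ[ℝ]) × (ℍ[ℝ] × ℍ[ℝ]) // N p.1 + N p.2 = 1 }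

noncomputable instance : TopologicalSpace OSphere :=
  instTopologicalSpaceSubtype

/-- The relation defining the octonionic projective line: `(x, y) r (x̃, ỹ)` iff
`x ∘ x^* = x̃ ∘ x̃^*`, `x ∘ y^* = x̃ ∘ ỹ^*` and `y ∘ y^* = ỹ ∘ ỹ^*`. -/
def oRel (p q : OSphere) : Prop :=
  omul p.1.1 (oconj p.1.1) = omul q.1.1 (oconj q.1.1) ∧
    omul p.1.1 (oconj p.1.2) = omul q.1.1 (oconj q.1.2) ∧
    omul p.1.2 (oconj p.1.2) = omul q.1.2 (oconj q.1.2)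

theorem qnormsq (a : ℍ[ℝ]) : ‖a‖^2 = a.re^2 + a.imI^2 + a.imJ^2 + a.imK^2 := by
  rw [sq, ← normSq_eq_norm_mul_self, normSq_def']

theorem omul_oconj_self (x : ℍ[ℝ] × ℍ[ℝ]) : omul x (oconj x) = (((N x : ℝ) : ℍ[ℝ]), 0) := by
  unfold omul oconj N
  refine Prod.ext ?_ ?_
  · show x.1 * star x.1 - star (-x.2) * x.2 = _
    rw [star_neg, neg_mul, sub_neg_eq_add, self_mul_star, star_mul_self]
    push_cast [← normSq_eq_norm_mul_self, sq]
    norm_cast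
  · show -x.2 * x.1 + x.2 * star (star x.1) = 0
    rw [star_star, neg_mul, neg_add_cancel]

theorem N_omul_oconj (x y : ℍ[ℝ] × ℍ[ℝ]) : N (omul x (oconj y)) = N x * N y := by
  show ‖x.1 * star y.1 - star (-y.2) * x.2‖^2 + ‖-y.2 * x.1 + x.2 * star (star y.1)‖^2 = _
  simp only [qnormsq, Quaternion.re_mul, Quaternion.imI_mul, Quaternion.imJ_mul,
    Quaternion.imK_mul, Quaternion.re_sub, Quaternion.imI_sub, Quaternion.imJ_sub,
    Quaternion.imK_sub, Quaternion.re_add, Quaternion.imI_add, Quaternion.imJ_add,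
    Quaternion.imK_add, Quaternion.re_star, Quaternion.imI_star, Quaternion.imJ_star,
    Quaternion.imK_star, Quaternion.re_neg, Quaternion.imI_neg, Quaternion.imJ_neg,
    Quaternion.imK_neg, N]
  ring

def qmk (a b c d : ℝ) : ℍ[ℝ] := ⟨a, b, c, d⟩
@[simp] theorem qmk_re (a b c d : ℝ) : (qmk a b c d).re = a := rfl
@[simp] theorem qmk_imI (a b c d : ℝ) : (qmk a b c d).imI = b := rfl
@[simp] theorem qmk_imJ (a b c d : ℝ) : (qmk a b c d).imJ = c := rfl
@[simp] theorem qmk_imK (a b c d : ℝ) : (qmk a b c d).imK = d := rfl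

noncomputable def hopf (p : OSphere) : EuclideanSpace ℝ (Fin 9) :=
  WithLp.toLp 2 (![2*(omul p.1.1 (oconj p.1.2)).1.re, 2*(omul p.1.1 (oconj p.1.2)).1.imI,
    2*(omul p.1.1 (oconj p.1.2)).1.imJ, 2*(omul p.1.1 (oconj p.1.2)).1.imK,
    2*(omul p.1.1 (oconj p.1.2)).2.re, 2*(omul p.1.1 (oconj p.1.2)).2.imI,
    2*(omul p.1.1 (oconj p.1.2)).2.imJ, 2*(omul p.1.1 (oconj p.1.2)).2.imK,
    N p.1.1 - N p.1.2])

theorem hopf_norm (p : OSphere) : ‖hopf p‖ = 1 := by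
  have hN := N_omul_oconj p.1.1 p.1.2
  have hq1 := qnormsq (omul p.1.1 (oconj p.1.2)).1
  have hq2 := qnormsq (omul p.1.1 (oconj p.1.2)).2
  have hs := p.2
  unfold N at hN hs
  rw [EuclideanSpace.norm_eq]
  rw [show (∑ i : Fin 9, ‖hopf p i‖^2) = 1 from ?_, Real.sqrt_one]
  simp only [hopf, Fin.sum_univ_succ, Finset.sum_empty, Fin.sum_univ_zero,
    Matrix.cons_val_zero, Matrix.cons_val_succ, Real.norm_eq_abs, sq_abs, N]
  linear_combination (-4)*hq1 + (-4)*hq2 + 4*hN + (‖p.1.1.1‖^2 + ‖p.1.1.2‖^2 + ‖p.1.2.1‖^2 + ‖p.1.2.2‖^2 + 1)*hs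

theorem N_eq_of_sq (x y : ℍ[ℝ] × ℍ[ℝ]) (h : omul x (oconj x) = omul y (oconj y)) :
    N x = N y := by
  rw [omul_oconj_self, omul_oconj_self] at h
  have h1 : ((N x : ℝ) : ℍ[ℝ]) = ((N y : ℝ) : ℍ[ℝ]) := congrArg Prod.fst h
  exact Quaternion.coe_injective h1

theorem hopf_eq_of_oRel {p q : OSphere} (h : oRel p q) : hopf p = hopf q := by
  obtain ⟨h1, h2, h3⟩ := h
  have hx := N_eq_of_sq _ _ h1
  have hy := N_eq_of_sq _ _ h3
  unfold hopf
  rw [h2, hx, hy]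

theorem oRel_of_hopf_eq {p q : OSphere} (h : hopf p = hopf q) : oRel p q := by
  have hc : ∀ i : Fin 9, hopf p i = hopf q i := fun i => congrArg (fun v => v i) h
  have h0 : 2*(omul p.1.1 (oconj p.1.2)).1.re = 2*(omul q.1.1 (oconj q.1.2)).1.re := hc 0
  have h1 : 2*(omul p.1.1 (oconj p.1.2)).1.imI = 2*(omul q.1.1 (oconj q.1.2)).1.imI := hc 1
  have h2 : 2*(omul p.1.1 (oconj p.1.2)).1.imJ = 2*(omul q.1.1 (oconj q.1.2)).1.imJ := hc 2
  have h3 : 2*(omul p.1.1 (oconj p.1.2)).1.imK = 2*(omul q.1.1 (oconj q.1.2)).1.imK := hc 3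
  have h4 : 2*(omul p.1.1 (oconj p.1.2)).2.re = 2*(omul q.1.1 (oconj q.1.2)).2.re := hc 4
  have h5 : 2*(omul p.1.1 (oconj p.1.2)).2.imI = 2*(omul q.1.1 (oconj q.1.2)).2.imI := hc 5
  have h6 : 2*(omul p.1.1 (oconj p.1.2)).2.imJ = 2*(omul q.1.1 (oconj q.1.2)).2.imJ := hc 6
  have h7 : 2*(omul p.1.1 (oconj p.1.2)).2.imK = 2*(omul q.1.1 (oconj q.1.2)).2.imK := hc 7
  have h8 : N p.1.1 - N p.1.2 = N q.1.1 - N q.1.2 := hc 8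
  have hmul : omul p.1.1 (oconj p.1.2) = omul q.1.1 (oconj q.1.2) := by
    refine Prod.ext ?_ ?_ <;> ext <;> linarith
  have hNx : N p.1.1 = N q.1.1 := by
    have := p.2; have := q.2; linarith
  have hNy : N p.1.2 = N q.1.2 := by
    have := p.2; have := q.2; linarith
  refine ⟨?_, hmul, ?_⟩
  · rw [omul_oconj_self, omul_oconj_self, hNx]
  · rw [omul_oconj_self, omul_oconj_self, hNy]

theorem hopf_continuous : Continuous hopf := by
  have hA : Continuous fun p : OSphere => p.1.1.1 :=
    continuous_fst.comp (continuous_fst.comp continuous_subtype_val)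
  have hB : Continuous fun p : OSphere => p.1.1.2 :=
    continuous_snd.comp (continuous_fst.comp continuous_subtype_val)
  have hC : Continuous fun p : OSphere => p.1.2.1 :=
    continuous_fst.comp (continuous_snd.comp continuous_subtype_val)
  have hD : Continuous fun p : OSphere => p.1.2.2 :=
    continuous_snd.comp (continuous_snd.comp continuous_subtype_val)
  have hQ1 : Continuous fun p : OSphere => (omul p.1.1 (oconj p.1.2)).1 :=
    (hA.mul hC.star).sub (hD.neg.star.mul hB)
  have hQ2 : Continuous fun p : OSphere => (omul p.1.1 (oconj p.1.2)).2 :=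
    (hD.neg.mul hA).add (hB.mul hC.star.star)
  have hNN : Continuous fun p : OSphere => N p.1.1 - N p.1.2 :=
    ((hA.norm.pow 2).add (hB.norm.pow 2)).sub ((hC.norm.pow 2).add (hD.norm.pow 2))
  refine (PiLp.continuous_toLp (p := 2) (β := fun _ : Fin 9 => ℝ)).comp (continuous_pi ?_)
  intro i
  fin_cases i
  · exact continuous_const.mul (Quaternion.continuous_re.comp hQ1)
  · exact continuous_const.mul (Quaternion.continuous_imI.comp hQ1)
  · exact continuous_const.mul (Quaternion.continuous_imJ.comp hQ1)
  · exact continuous_const.mul (Quaternion.continuous_imK.comp hQ1)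
  · exact continuous_const.mul (Quaternion.continuous_re.comp hQ2)
  · exact continuous_const.mul (Quaternion.continuous_imI.comp hQ2)
  · exact continuous_const.mul (Quaternion.continuous_imJ.comp hQ2)
  · exact continuous_const.mul (Quaternion.continuous_imK.comp hQ2)
  · exact hNN

theorem sum9 (f : Fin 9 → ℝ) :
    ∑ i, f i = f 0 + f 1 + f 2 + f 3 + f 4 + f 5 + f 6 + f 7 + f 8 := by
  rw [Fin.sum_univ_castSucc, Fin.sum_univ_eight]
  rfl

set_option maxHeartbeats 2000000 in
theorem hopf_surjective (w : EuclideanSpace ℝ (Fin 9)) (hw : ‖w‖ = 1) :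
    ∃ p : OSphere, hopf p = w := by
  have hsum : (w 0)^2 + (w 1)^2 + (w 2)^2 + (w 3)^2 + (w 4)^2 + (w 5)^2 + (w 6)^2
      + (w 7)^2 + (w 8)^2 = 1 := by
    have h1 : Real.sqrt (∑ i, ‖w i‖^2) = 1 := by rw [← EuclideanSpace.norm_eq]; exact hw
    have h2 : (∑ i, ‖w i‖^2) = 1 := by
      have hnn : (0:ℝ) ≤ ∑ i, ‖w i‖^2 := by positivity
      nlinarith [Real.sq_sqrt hnn, h1]
    rw [sum9] at h2
    simpa [Real.norm_eq_abs, sq_abs] using h2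
  by_cases ht : w 8 = 1
  · -- degenerate case: south/north pole
    have hz : ∀ k : Fin 9, k ≠ 8 → False ∨ True := fun _ _ => Or.inr trivial
    have h0 : w 0 = 0 := by
      have : (w 0)^2 = 0 := le_antisymm (by nlinarith [sq_nonneg (w 1), sq_nonneg (w 2), sq_nonneg (w 3), sq_nonneg (w 4), sq_nonneg (w 5), sq_nonneg (w 6), sq_nonneg (w 7)]) (sq_nonneg _)
      exact pow_eq_zero_iff two_ne_zero |>.mp this
    have h1 : w 1 = 0 := by
      have : (w 1)^2 = 0 := le_antisymm (by nlinarith [sq_nonneg (w 0), sq_nonneg (w 2), sq_nonneg (w 3), sq_nonneg (w 4), sq_nonneg (w 5), sq_nonneg (w 6), sq_nonneg (w 7)]) (sq_nonneg _)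
      exact pow_eq_zero_iff two_ne_zero |>.mp this
    have h2 : w 2 = 0 := by
      have : (w 2)^2 = 0 := le_antisymm (by nlinarith [sq_nonneg (w 0), sq_nonneg (w 1), sq_nonneg (w 3), sq_nonneg (w 4), sq_nonneg (w 5), sq_nonneg (w 6), sq_nonneg (w 7)]) (sq_nonneg _)
      exact pow_eq_zero_iff two_ne_zero |>.mp this
    have h3 : w 3 = 0 := by
      have : (w 3)^2 = 0 := le_antisymm (by nlinarith [sq_nonneg (w 0), sq_nonneg (w 1), sq_nonneg (w 2), sq_nonneg (w 4), sq_nonneg (w 5), sq_nonneg (w 6), sq_nonneg (w 7)]) (sq_nonneg _)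
      exact pow_eq_zero_iff two_ne_zero |>.mp this
    have h4 : w 4 = 0 := by
      have : (w 4)^2 = 0 := le_antisymm (by nlinarith [sq_nonneg (w 0), sq_nonneg (w 1), sq_nonneg (w 2), sq_nonneg (w 3), sq_nonneg (w 5), sq_nonneg (w 6), sq_nonneg (w 7)]) (sq_nonneg _)
      exact pow_eq_zero_iff two_ne_zero |>.mp this
    have h5 : w 5 = 0 := by
      have : (w 5)^2 = 0 := le_antisymm (by nlinarith [sq_nonneg (w 0), sq_nonneg (w 1), sq_nonneg (w 2), sq_nonneg (w 3), sq_nonneg (w 4), sq_nonneg (w 6), sq_nonneg (w 7)]) (sq_nonneg _)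
      exact pow_eq_zero_iff two_ne_zero |>.mp this
    have h6 : w 6 = 0 := by
      have : (w 6)^2 = 0 := le_antisymm (by nlinarith [sq_nonneg (w 0), sq_nonneg (w 1), sq_nonneg (w 2), sq_nonneg (w 3), sq_nonneg (w 4), sq_nonneg (w 5), sq_nonneg (w 7)]) (sq_nonneg _)
      exact pow_eq_zero_iff two_ne_zero |>.mp this
    have h7 : w 7 = 0 := by
      have : (w 7)^2 = 0 := le_antisymm (by nlinarith [sq_nonneg (w 0), sq_nonneg (w 1), sq_nonneg (w 2), sq_nonneg (w 3), sq_nonneg (w 4), sq_nonneg (w 5), sq_nonneg (w 6)]) (sq_nonneg _)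
      exact pow_eq_zero_iff two_ne_zero |>.mp this
    have hmem : N ((1 : ℍ[ℝ]), (0 : ℍ[ℝ])) + N ((0 : ℍ[ℝ]), (0 : ℍ[ℝ])) = 1 := by
      simp [N]
    refine ⟨⟨(((1 : ℍ[ℝ]), (0 : ℍ[ℝ])), ((0 : ℍ[ℝ]), (0 : ℍ[ℝ]))), hmem⟩, ?_⟩
    have hX : omul ((1 : ℍ[ℝ]), (0 : ℍ[ℝ])) (oconj ((0 : ℍ[ℝ]), (0 : ℍ[ℝ]))) = (0, 0) := by
      simp [omul, oconj]
    have hNv : N ((1 : ℍ[ℝ]), (0 : ℍ[ℝ])) - N ((0 : ℍ[ℝ]), (0 : ℍ[ℝ])) = 1 := by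
      simp [N]
    ext i
    fin_cases i
    · show 2 * (omul ((1 : ℍ[ℝ]), (0:ℍ[ℝ])) (oconj ((0:ℍ[ℝ]), (0:ℍ[ℝ])))).1.re = w 0
      rw [hX]; simpa using h0.symm
    · show 2 * (omul ((1 : ℍ[ℝ]), (0:ℍ[ℝ])) (oconj ((0:ℍ[ℝ]), (0:ℍ[ℝ])))).1.imI = w 1
      rw [hX]; simpa using h1.symm
    · show 2 * (omul ((1 : ℍ[ℝ]), (0:ℍ[ℝ])) (oconj ((0:ℍ[ℝ]), (0:ℍ[ℝ])))).1.imJ = w 2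
      rw [hX]; simpa using h2.symm
    · show 2 * (omul ((1 : ℍ[ℝ]), (0:ℍ[ℝ])) (oconj ((0:ℍ[ℝ]), (0:ℍ[ℝ])))).1.imK = w 3
      rw [hX]; simpa using h3.symm
    · show 2 * (omul ((1 : ℍ[ℝ]), (0:ℍ[ℝ])) (oconj ((0:ℍ[ℝ]), (0:ℍ[ℝ])))).2.re = w 4
      rw [hX]; simpa using h4.symm
    · show 2 * (omul ((1 : ℍ[ℝ]), (0:ℍ[ℝ])) (oconj ((0:ℍ[ℝ]), (0:ℍ[ℝ])))).2.imI = w 5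
      rw [hX]; simpa using h5.symm
    · show 2 * (omul ((1 : ℍ[ℝ]), (0:ℍ[ℝ])) (oconj ((0:ℍ[ℝ]), (0:ℍ[ℝ])))).2.imJ = w 6
      rw [hX]; simpa using h6.symm
    · show 2 * (omul ((1 : ℍ[ℝ]), (0:ℍ[ℝ])) (oconj ((0:ℍ[ℝ]), (0:ℍ[ℝ])))).2.imK = w 7
      rw [hX]; simpa using h7.symm
    · show N ((1 : ℍ[ℝ]), (0 : ℍ[ℝ])) - N ((0 : ℍ[ℝ]), (0 : ℍ[ℝ])) = w 8
      rw [hNv, ht]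
  · -- generic case
    set t := w 8 with htdef
    have hle : t^2 ≤ 1 := by nlinarith [sq_nonneg (w 0), sq_nonneg (w 1), sq_nonneg (w 2), sq_nonneg (w 3), sq_nonneg (w 4), sq_nonneg (w 5), sq_nonneg (w 6), sq_nonneg (w 7)]
    have htlt : t < 1 := lt_of_le_of_ne (by nlinarith [sq_nonneg (t - 1)]) ht
    set s := Real.sqrt ((1 - t)/2) with hsdef
    have hs0 : 0 < s := Real.sqrt_pos.mpr (by linarith)
    have hs2 : s^2 = (1 - t)/2 := Real.sq_sqrt (by linarith)
    set x1 : ℍ[ℝ] := (2*s)⁻¹ • (qmk (w 0) (w 1) (w 2) (w 3)) with hx1def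
    set x2 : ℍ[ℝ] := (2*s)⁻¹ • (qmk (w 4) (w 5) (w 6) (w 7)) with hx2def
    have hnx1 : ‖x1‖^2 = (2*s)⁻¹^2 * ((w 0)^2 + (w 1)^2 + (w 2)^2 + (w 3)^2) := by
      rw [hx1def, qnormsq]
      simp only [Quaternion.re_smul, Quaternion.imI_smul,
        Quaternion.imJ_smul, Quaternion.imK_smul, smul_eq_mul, qmk_re, qmk_imI, qmk_imJ, qmk_imK]
      ring
    have hnx2 : ‖x2‖^2 = (2*s)⁻¹^2 * ((w 4)^2 + (w 5)^2 + (w 6)^2 + (w 7)^2) := by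
      rw [hx2def, qnormsq]
      simp only [Quaternion.re_smul, Quaternion.imI_smul,
        Quaternion.imJ_smul, Quaternion.imK_smul, smul_eq_mul, qmk_re, qmk_imI, qmk_imJ, qmk_imK]
      ring
    have hNx : N (x1, x2) = (1 + t)/2 := by
      unfold N
      dsimp only
      rw [hnx1, hnx2]
      have hsne : s ≠ 0 := ne_of_gt hs0
      field_simp
      nlinarith [hs2, hsum]
    have hNy : N ((s : ℍ[ℝ]), (0 : ℍ[ℝ])) = (1 - t)/2 := by
      simp [N, sq_abs]
      nlinarith [hs2]
    have hmem : N (x1, x2) + N ((s : ℍ[ℝ]), (0 : ℍ[ℝ])) = 1 := by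
      rw [hNx, hNy]; ring
    refine ⟨⟨((x1, x2), ((s : ℍ[ℝ]), (0 : ℍ[ℝ]))), hmem⟩, ?_⟩
    have hX : omul (x1, x2) (oconj ((s : ℍ[ℝ]), (0 : ℍ[ℝ]))) = (x1 * (s : ℍ[ℝ]), x2 * (s : ℍ[ℝ])) := by
      simp [omul, oconj, star_coe]
    have hcomp : ∀ a : ℝ, 2 * ((2*s)⁻¹ * a * s) = a := by
      intro a
      have hsne : s ≠ 0 := ne_of_gt hs0
      field_simp
    ext i
    fin_cases i
    · show 2 * (omul (x1, x2) (oconj ((s : ℍ[ℝ]), (0:ℍ[ℝ])))).1.re = w 0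
      rw [hX]
      simp [hx1def, Quaternion.re_mul, Quaternion.re_smul, Quaternion.imI_smul,
        Quaternion.imJ_smul, Quaternion.imK_smul]
      field_simp [ne_of_gt hs0]
      try ring
    · show 2 * (omul (x1, x2) (oconj ((s : ℍ[ℝ]), (0:ℍ[ℝ])))).1.imI = w 1
      rw [hX]
      simp [hx1def, Quaternion.imI_mul, Quaternion.re_smul, Quaternion.imI_smul,
        Quaternion.imJ_smul, Quaternion.imK_smul]
      field_simp [ne_of_gt hs0]
      try ring
    · show 2 * (omul (x1, x2) (oconj ((s : ℍ[ℝ]), (0:ℍ[ℝ])))).1.imJ = w 2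
      rw [hX]
      simp [hx1def, Quaternion.imJ_mul, Quaternion.re_smul, Quaternion.imI_smul,
        Quaternion.imJ_smul, Quaternion.imK_smul]
      field_simp [ne_of_gt hs0]
      try ring
    · show 2 * (omul (x1, x2) (oconj ((s : ℍ[ℝ]), (0:ℍ[ℝ])))).1.imK = w 3
      rw [hX]
      simp [hx1def, Quaternion.imK_mul, Quaternion.re_smul, Quaternion.imI_smul,
        Quaternion.imJ_smul, Quaternion.imK_smul]
      field_simp [ne_of_gt hs0]
      try ring
    · show 2 * (omul (x1, x2) (oconj ((s : ℍ[ℝ]), (0:ℍ[ℝ])))).2.re = w 4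
      rw [hX]
      simp [hx2def, Quaternion.re_mul, Quaternion.re_smul, Quaternion.imI_smul,
        Quaternion.imJ_smul, Quaternion.imK_smul]
      field_simp [ne_of_gt hs0]
      try ring
    · show 2 * (omul (x1, x2) (oconj ((s : ℍ[ℝ]), (0:ℍ[ℝ])))).2.imI = w 5
      rw [hX]
      simp [hx2def, Quaternion.imI_mul, Quaternion.re_smul, Quaternion.imI_smul,
        Quaternion.imJ_smul, Quaternion.imK_smul]
      field_simp [ne_of_gt hs0]
      try ring
    · show 2 * (omul (x1, x2) (oconj ((s : ℍ[ℝ]), (0:ℍ[ℝ])))).2.imJ = w 6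
      rw [hX]
      simp [hx2def, Quaternion.imJ_mul, Quaternion.re_smul, Quaternion.imI_smul,
        Quaternion.imJ_smul, Quaternion.imK_smul]
      field_simp [ne_of_gt hs0]
      try ring
    · show 2 * (omul (x1, x2) (oconj ((s : ℍ[ℝ]), (0:ℍ[ℝ])))).2.imK = w 7
      rw [hX]
      simp [hx2def, Quaternion.imK_mul, Quaternion.re_smul, Quaternion.imI_smul,
        Quaternion.imJ_smul, Quaternion.imK_smul]
      field_simp [ne_of_gt hs0]
      try ring
    · show N (x1, x2) - N ((s : ℍ[ℝ]), (0 : ℍ[ℝ])) = w 8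
      rw [hNx, hNy]; ring

instance : CompactSpace OSphere := by
  have hC : IsCompact {p : (ℍ[ℝ] × ℍ[ℝ]) × (ℍ[ℝ] × ℍ[ℝ]) | N p.1 + N p.2 = 1} := by
    have hcl : IsClosed {p : (ℍ[ℝ] × ℍ[ℝ]) × (ℍ[ℝ] × ℍ[ℝ]) | N p.1 + N p.2 = 1} := by
      apply isClosed_eq ?_ continuous_const
      exact ((((continuous_fst.comp continuous_fst).norm.pow 2).add
        ((continuous_snd.comp continuous_fst).norm.pow 2)).add
        (((continuous_fst.comp continuous_snd).norm.pow 2).add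
        ((continuous_snd.comp continuous_snd).norm.pow 2)))
    have hbd : Bornology.IsBounded {p : (ℍ[ℝ] × ℍ[ℝ]) × (ℍ[ℝ] × ℍ[ℝ]) | N p.1 + N p.2 = 1} := by
      apply Metric.isBounded_closedBall (x := 0) (r := 1) |>.subset
      intro p hp
      simp only [Set.mem_setOf_eq, N] at hp
      rw [Metric.mem_closedBall, dist_zero_right, Prod.norm_def, Prod.norm_def, Prod.norm_def]
      have h1 : ‖p.1.1‖ ≤ 1 := by nlinarith [sq_nonneg (‖p.1.1‖ - 1), sq_nonneg ‖p.1.2‖, sq_nonneg ‖p.2.1‖, sq_nonneg ‖p.2.2‖]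
      have h2 : ‖p.1.2‖ ≤ 1 := by nlinarith [sq_nonneg (‖p.1.2‖ - 1), sq_nonneg ‖p.1.1‖, sq_nonneg ‖p.2.1‖, sq_nonneg ‖p.2.2‖]
      have h3 : ‖p.2.1‖ ≤ 1 := by nlinarith [sq_nonneg (‖p.2.1‖ - 1), sq_nonneg ‖p.1.1‖, sq_nonneg ‖p.1.2‖, sq_nonneg ‖p.2.2‖]
      have h4 : ‖p.2.2‖ ≤ 1 := by nlinarith [sq_nonneg (‖p.2.2‖ - 1), sq_nonneg ‖p.1.1‖, sq_nonneg ‖p.1.2‖, sq_nonneg ‖p.2.1‖]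
      exact max_le (max_le h1 h2) (max_le h3 h4)
    exact Metric.isCompact_of_isClosed_isBounded hcl hbd
  exact isCompact_iff_compactSpace.mp hC

noncomputable def oF : OSphere → Metric.sphere (0 : EuclideanSpace ℝ (Fin 9)) 1 := fun p =>
  ⟨hopf p, mem_sphere_zero_iff_norm.mpr (hopf_norm p)⟩

noncomputable def oG : Quot oRel → Metric.sphere (0 : EuclideanSpace ℝ (Fin 9)) 1 :=
  Quot.lift oF (fun a b h => Subtype.ext (hopf_eq_of_oRel h))

/-- The octonionic projective line `𝕆P¹ = S / r`, with the quotient topology, is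
homeomorphic to the unit sphere `S⁸ ⊆ ℝ⁹`. -/
theorem octonionP1_homeomorph_sphere :
    Nonempty (Quot oRel ≃ₜ Metric.sphere (0 : EuclideanSpace ℝ (Fin 9)) 1) := by
  have hGc : Continuous oG :=
    continuous_quot_lift _ (Continuous.subtype_mk hopf_continuous _)
  have hGbij : Function.Bijective oG := by
    constructor
    · intro a b h
      obtain ⟨p, rfl⟩ := Quot.exists_rep a
      obtain ⟨q, rfl⟩ := Quot.exists_rep b
      exact Quot.sound (oRel_of_hopf_eq (congrArg Subtype.val h))
    · rintro ⟨w, hw⟩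
      have hw' : ‖w‖ = 1 := mem_sphere_zero_iff_norm.mp hw
      obtain ⟨p, hp⟩ := hopf_surjective w hw'
      exact ⟨Quot.mk _ p, Subtype.ext hp⟩
  exact ⟨Continuous.homeoOfEquivCompactToT2 (f := Equiv.ofBijective oG hGbij) hGc⟩
end
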